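/- Let R : X ⇸ Y be a total and surjective relation (every x ∈ X has some y with x R y, and every y ∈ Y has some x with x R y). Then for every lax M-lifting L of the monotone neighbourhood functor M, one has M̃ R ⊆ L R. -/

import Mathlib

universe u v

open CategoryTheory

/-- Relation composition (removed from Mathlib; old meaning). -/
def Rel.comp {α β γ : Type*} (r : Rel α β) (s : Rel β γ) : Rel α γ :=
  fun x z => ∃ y, r x y ∧ s y z

/-- Inverse relation (removed from Mathlib; old meaning). -/
def Rel.inv {α β : Type*} (r : Rel α β) : Rel β α := flip r

/-- The graph of a function, as a relation. -/
def gr {X Y : Type u} (f : X → Y) : Rel X Y := fun x y => f x = y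

/-- A lax lifting of an endofunctor `F` on `Set` to relations: monotone, laxly
functorial, and laxly extending graphs and converse graphs. -/
structure LaxLifting (F : Type u ⥤ Type u) : Type (u + 1) where
  map : ∀ {X Y : Type u}, Rel X Y → Rel (F.obj X) (F.obj Y)
  mono : ∀ {X Y : Type u} {R S : Rel X Y}, R ≤ S → map R ≤ map S
  laxComp : ∀ {X Y Z : Type u} (R : Rel X Y) (S : Rel Y Z),
    (map R).comp (map S) ≤ map (R.comp S)
  graph_le : ∀ {X Y : Type u} (f : X → Y), gr ⇑(F.map (TypeCat.ofHom f)) ≤ map (gr f)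
  graphInv_le : ∀ {X Y : Type u} (f : X → Y), (gr ⇑(F.map (TypeCat.ofHom f))).inv ≤ map (gr f).inv

/-- Pointwise order on lax liftings. -/
def LiftLE {F : Type u ⥤ Type u} (L L' : LaxLifting F) : Prop :=
  ∀ (X Y : Type u) (R : Rel X Y), L.map R ≤ L'.map R

/-- The monotone neighbourhood functor: \`M X\` is the set of upward-closed
collections of subsets of \`X\`. -/
def MFunctor : Type u ⥤ Type u where
  obj X := {U : Set (Set X) // ∀ u u' : Set X, u ∈ U → u ⊆ u' → u' ∈ U}
  map f := TypeCat.ofHom fun U => ⟨{v | ⇑f ⁻¹' v ∈ U.1}, fun v v' hv hsub =>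
    U.2 _ _ hv (Set.preimage_mono hsub)⟩
  map_id X := rfl
  map_comp f g := rfl

/-- The lifting \`M̃\` of the monotone neighbourhood functor. -/
def Mtilde {X Y : Type u} (R : Rel X Y) :
    Rel (MFunctor.obj X) (MFunctor.obj Y) := fun U V =>
  (∀ u ∈ U.1, ∃ v ∈ V.1, ∀ y ∈ v, ∃ x ∈ u, R x y) ∧
  (∀ v ∈ V.1, ∃ u ∈ U.1, ∀ x ∈ u, ∃ y ∈ v, R x y)

/-- For a total surjective relation `R`, `M̃ R` is below `L R` for every lax
lifting `L` of the monotone neighbourhood functor. -/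
theorem Mtilde_le_of_total_surjective {X Y : Type u} (R : Rel X Y)
    (htot : ∀ x : X, ∃ y : Y, R x y) (hsur : ∀ y : Y, ∃ x : X, R x y)
    (L : LaxLifting MFunctor) :
    Mtilde R ≤ L.map R := by
  intro U V hUV
  obtain ⟨h1, h2⟩ := hUV
  let Z : Type u := {p : X × Y // R p.1 p.2}
  let p1 : Z → X := fun z => z.1.1
  let p2 : Z → Y := fun z => z.1.2
  have hcomp : ((gr p1).inv.comp (gr p2)) ≤ R := by
    rintro x y ⟨z, hz1, hz2⟩
    have hz1' : p1 z = x := hz1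
    have hz2' : p2 z = y := hz2
    rw [← hz1', ← hz2']
    exact z.2
  let W : MFunctor.obj Z :=
    ⟨{w | (∃ u ∈ U.1, p1 ⁻¹' u ⊆ w) ∨ (∃ v ∈ V.1, p2 ⁻¹' v ⊆ w)},
     by
      rintro w w' (⟨u, hu, hsub⟩ | ⟨v, hv, hsub⟩) hww'
      · exact Or.inl ⟨u, hu, hsub.trans hww'⟩
      · exact Or.inr ⟨v, hv, hsub.trans hww'⟩⟩
  have hW1 : MFunctor.map (TypeCat.ofHom p1) W = U := by
    apply Subtype.ext
    ext u
    show p1 ⁻¹' u ∈ W.1 ↔ u ∈ U.1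
    constructor
    · rintro (⟨u', hu', hsub⟩ | ⟨v, hv, hsub⟩)
      · refine U.2 u' u hu' (fun x hx => ?_)
        obtain ⟨y, hy⟩ := htot x
        exact hsub (show p1 ⟨(x, y), hy⟩ ∈ u' from hx)
      · obtain ⟨u', hu', hmatch⟩ := h2 v hv
        refine U.2 u' u hu' (fun x hx => ?_)
        obtain ⟨y, hyv, hxy⟩ := hmatch x hx
        exact hsub (show p2 ⟨(x, y), hxy⟩ ∈ v from hyv)
    · intro hu
      exact Or.inl ⟨u, hu, subset_rfl⟩
  have hW2 : MFunctor.map (TypeCat.ofHom p2) W = V := by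
    apply Subtype.ext
    ext v
    show p2 ⁻¹' v ∈ W.1 ↔ v ∈ V.1
    constructor
    · rintro (⟨u, hu, hsub⟩ | ⟨v', hv', hsub⟩)
      · obtain ⟨v', hv', hmatch⟩ := h1 u hu
        refine V.2 v' v hv' (fun y hy => ?_)
        obtain ⟨x, hxu, hxy⟩ := hmatch y hy
        exact hsub (show p1 ⟨(x, y), hxy⟩ ∈ u from hxu)
      · refine V.2 v' v hv' (fun y hy => ?_)
        obtain ⟨x, hx⟩ := hsur y
        exact hsub (show p2 ⟨(x, y), hx⟩ ∈ v' from hy)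
    · intro hv
      exact Or.inr ⟨v, hv, subset_rfl⟩
  apply L.mono hcomp
  apply L.laxComp
  exact ⟨W, L.graphInv_le p1 U W hW1, L.graph_le p2 W V hW2⟩
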